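/- If a family of probability density functions indexed by a set A contains linearly independent functions under finite mixtures (i.e., every finite subfamily is linearly independent), then the corresponding finite mixture family is identifiable up to permutations: whenever two finite mixtures with distinct components each and summing weights 1 are equal as functions, they have the same number of components and there is a bijection matching components with equal weights and equal density functions. -/
import Mathlib


open MeasureTheory

/-- If a family of probability density functions indexed by `A` contains
linearly independent functions under finite mixtures (every finite subfamily is linearly
independent), then the finite mixture family is identifiable up to permutations. -/
theorem finite_mixture_identifiable_up_to_permutation
    {d : ℕ} {A : Type*} (f : A → (Fin d → ℝ) → ℝ)
    (hmeas : ∀ a, Measurable (f a)) (hnonneg : ∀ a x, 0 ≤ f a x)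
    (hLI : ∀ S : Finset A, LinearIndependent ℝ (fun a : S => f a.1))
    {N M : ℕ} (a : Fin N → A) (b : Fin M → A)
    (ha : Function.Injective a) (hb : Function.Injective b)
    (c : Fin N → ℝ) (c' : Fin M → ℝ)
    (hc : ∀ i, 0 < c i) (hc' : ∀ j, 0 < c' j)
    (hsum : ∑ i, c i = 1) (hsum' : ∑ j, c' j = 1)
    (heq : ∀ x, ∑ i, c i * f (a i) x = ∑ j, c' j * f (b j) x) :
    N = M ∧ ∃ e : Fin N ≃ Fin M, ∀ i, c i = c' (e i) ∧ f (a i) = f (b (e i)) := by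
  classical
  set S : Finset A := Finset.image a Finset.univ ∪ Finset.image b Finset.univ with hS
  set lam : A → ℝ := fun s =>
    (∑ i ∈ Finset.univ.filter (fun i => a i = s), c i)
    - (∑ j ∈ Finset.univ.filter (fun j => b j = s), c' j) with hlam
  have hzero : ∀ s ∈ S, lam s = 0 := by
    have hLIS := hLI S
    rw [Fintype.linearIndependent_iff] at hLIS
    have hsum0 : ∑ s : S, lam s.1 • (fun x : Fin d → ℝ => f s.1 x) = 0 := by
      funext x
      simp only [Finset.sum_apply, Pi.smul_apply, Pi.zero_apply, smul_eq_mul]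
      rw [Finset.sum_coe_sort S (fun s => lam s * f s x)]
      have h1 : ∑ s ∈ S, (∑ i ∈ Finset.univ.filter (fun i => a i = s), c i) * f s x
          = ∑ i, c i * f (a i) x := by
        have : ∀ s ∈ S, (∑ i ∈ Finset.univ.filter (fun i => a i = s), c i) * f s x
            = ∑ i ∈ Finset.univ.filter (fun i => a i = s), c i * f (a i) x := by
          intro s _
          rw [Finset.sum_mul]
          refine Finset.sum_congr rfl fun i hi => ?_
          rw [(Finset.mem_filter.mp hi).2]
        rw [Finset.sum_congr rfl this]
        exact Finset.sum_fiberwise_of_maps_to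
          (fun i _ => Finset.mem_union_left _ (Finset.mem_image_of_mem a (Finset.mem_univ i)))
          (fun i => c i * f (a i) x)
      have h2 : ∑ s ∈ S, (∑ j ∈ Finset.univ.filter (fun j => b j = s), c' j) * f s x
          = ∑ j, c' j * f (b j) x := by
        have : ∀ s ∈ S, (∑ j ∈ Finset.univ.filter (fun j => b j = s), c' j) * f s x
            = ∑ j ∈ Finset.univ.filter (fun j => b j = s), c' j * f (b j) x := by
          intro s _
          rw [Finset.sum_mul]
          refine Finset.sum_congr rfl fun j hj => ?_
          rw [(Finset.mem_filter.mp hj).2]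
        rw [Finset.sum_congr rfl this]
        exact Finset.sum_fiberwise_of_maps_to
          (fun j _ => Finset.mem_union_right _ (Finset.mem_image_of_mem b (Finset.mem_univ j)))
          (fun j => c' j * f (b j) x)
      have : ∑ s ∈ S, lam s * f s x
          = ∑ s ∈ S, ((∑ i ∈ Finset.univ.filter (fun i => a i = s), c i) * f s x
            - (∑ j ∈ Finset.univ.filter (fun j => b j = s), c' j) * f s x) := by
        refine Finset.sum_congr rfl fun s _ => ?_
        simp [hlam, sub_mul]
      rw [this, Finset.sum_sub_distrib, h1, h2, heq x, sub_self]
    intro s hs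
    exact hLIS (fun s : S => lam s.1) hsum0 ⟨s, hs⟩
  -- from lam (a i) = 0 extract matching j
  have key_a : ∀ i, ∃ j, b j = a i ∧ c i = c' j := by
    intro i
    have h0 := hzero (a i)
      (Finset.mem_union_left _ (Finset.mem_image_of_mem a (Finset.mem_univ i)))
    have hfa : Finset.univ.filter (fun i' => a i' = a i) = {i} := by
      ext i'; simp [ha.eq_iff]
    rw [hlam] at h0
    simp only [hfa, Finset.sum_singleton] at h0
    have hci : c i = ∑ j ∈ Finset.univ.filter (fun j => b j = a i), c' j := by linarith
    have hne : (Finset.univ.filter (fun j => b j = a i)).Nonempty := by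
      by_contra h
      rw [Finset.not_nonempty_iff_eq_empty] at h
      rw [h, Finset.sum_empty] at hci
      exact absurd hci (ne_of_gt (hc i))
    obtain ⟨j, hj⟩ := hne
    have hbj : b j = a i := (Finset.mem_filter.mp hj).2
    have hfb : Finset.univ.filter (fun j' => b j' = a i) = {j} := by
      ext j'
      simp only [Finset.mem_filter, Finset.mem_univ, true_and, Finset.mem_singleton]
      constructor
      · intro h; exact hb (h.trans hbj.symm)
      · intro h; rw [h, hbj]
    rw [hfb, Finset.sum_singleton] at hci
    exact ⟨j, hbj, hci⟩
  have key_b : ∀ j, ∃ i, a i = b j ∧ c' j = c i := by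
    intro j
    have h0 := hzero (b j)
      (Finset.mem_union_right _ (Finset.mem_image_of_mem b (Finset.mem_univ j)))
    have hfb : Finset.univ.filter (fun j' => b j' = b j) = {j} := by
      ext j'; simp [hb.eq_iff]
    rw [hlam] at h0
    simp only [hfb, Finset.sum_singleton] at h0
    have hcj : c' j = ∑ i ∈ Finset.univ.filter (fun i => a i = b j), c i := by linarith
    have hne : (Finset.univ.filter (fun i => a i = b j)).Nonempty := by
      by_contra h
      rw [Finset.not_nonempty_iff_eq_empty] at h
      rw [h, Finset.sum_empty] at hcj
      exact absurd hcj (ne_of_gt (hc' j))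
    obtain ⟨i, hi⟩ := hne
    have hai : a i = b j := (Finset.mem_filter.mp hi).2
    have hfa : Finset.univ.filter (fun i' => a i' = b j) = {i} := by
      ext i'
      simp only [Finset.mem_filter, Finset.mem_univ, true_and, Finset.mem_singleton]
      constructor
      · intro h; exact ha (h.trans hai.symm)
      · intro h; rw [h, hai]
    rw [hfa, Finset.sum_singleton] at hcj
    exact ⟨i, hai, hcj⟩
  choose φ hφ1 hφ2 using key_a
  choose ψ hψ1 hψ2 using key_b
  have hlr : ∀ i, ψ (φ i) = i := fun i => ha (by rw [hψ1, hφ1])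
  have hrl : ∀ j, φ (ψ j) = j := fun j => hb (by rw [hφ1, hψ1])
  let e : Fin N ≃ Fin M := ⟨φ, ψ, hlr, hrl⟩
  refine ⟨by simpa using Fintype.card_congr e, e, fun i => ⟨hφ2 i, ?_⟩⟩
  show f (a i) = f (b (φ i))
  rw [hφ1 i]
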